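/- Let p ≥ 3 be prime, let s ≥ 0, let m = (p,…,p) (s+1 copies), and let S̄ be the p^{2s+2} × p^{2s+2} matrix with entries s_{(k,κ),(k̃,κ̃)} = −∏_{ℓ=0}^s ζ_p^{(κ_ℓ k̃_ℓ − κ̃_ℓ k_ℓ)/2} whenever (k̃,κ̃), (k,κ), (0,0) are pairwise distinct, and s_{(k,κ),(k̃,κ̃)} = 1 − δ_{(k,κ),(k̃,κ̃)} otherwise (indices ranging over (⊕_{ℓ=0}^s ℤ_p) × (⊕_{ℓ=0}^s ℤ_p); ζ_p a fixed primitive p-th root of unity; division by 2 taken modulo p). Then every off-diagonal entry of S̄ is a 2p-th root of unity, and for every positive integer N the Hadamard power S̄^{∘N} (entrywise N-th power) has exactly two distinct eigenvalues. Consequently (by the roux lines detector of Iverson–Mixon), the Gabor–Steiner equiangular tight frame G(m) spans a set of roux lines. -/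

import Mathlib

noncomputable section

/-- `ζ_q^a` for `a : ℤ_q`, with `ζ_q = exp(2πi/q)` a fixed primitive `q`-th root of
unity. -/
def zpow' (q : ℕ) (a : ZMod q) : ℂ :=
  Complex.exp (2 * Real.pi * Complex.I * (((a.val : ℕ) : ℂ) / ((q : ℕ) : ℂ)))

/-- The normalized signature matrix `S̄` of the Gabor–Steiner ETF `G(p,…,p)`: entries
`s_{(k,κ),(k̃,κ̃)} = −∏_{ℓ=0}^s ζ_p^{(κ_ℓ k̃_ℓ − κ̃_ℓ k_ℓ)/2}` when `(k,κ)`, `(k̃,κ̃)`,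
`(0,0)` are pairwise distinct, and `1 − δ_{(k,κ),(k̃,κ̃)}` otherwise (division by `2`
taken modulo `p`). -/
def gsSbarP (p : ℕ) (s : ℕ)
    (a b : (Fin (s + 1) → ZMod p) × (Fin (s + 1) → ZMod p)) : ℂ :=
  if a ≠ b ∧ a ≠ 0 ∧ b ≠ 0 then
    -∏ ℓ, zpow' p ((a.2 ℓ * b.1 ℓ - b.2 ℓ * a.1 ℓ) * (2 : ZMod p)⁻¹)
  else if a = b then 0 else 1

namespace GSaux

lemma zpow'_zero (p : ℕ) [NeZero p] : zpow' p 0 = 1 := by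
  simp [zpow', ZMod.val_zero]

lemma zpow'_add {p : ℕ} [NeZero p] (x y : ZMod p) :
    zpow' p (x + y) = zpow' p x * zpow' p y := by
  unfold zpow'
  rw [← Complex.exp_add]
  have hp : (p : ℂ) ≠ 0 := Nat.cast_ne_zero.2 (NeZero.ne p)
  set k : ℕ := (x.val + y.val) / p with hk
  have hnat : x.val + y.val = (x + y).val + p * k := by
    rw [ZMod.val_add, hk]
    exact (Nat.mod_add_div _ _).symm
  have hc : (x.val : ℂ) + (y.val : ℂ) = ((x + y).val : ℂ) + (k : ℂ) * p := by
    have h := congrArg (Nat.cast : ℕ → ℂ) hnat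
    push_cast at h
    linear_combination h
  have hcp : (2 * (Real.pi : ℂ) * Complex.I / p) * p = 2 * (Real.pi : ℂ) * Complex.I :=
    div_mul_cancel₀ _ hp
  have key : 2 * (Real.pi : ℂ) * Complex.I * ((x.val : ℂ) / p)
      + 2 * (Real.pi : ℂ) * Complex.I * ((y.val : ℂ) / p)
      = 2 * (Real.pi : ℂ) * Complex.I * (((x + y).val : ℂ) / p)
        + (k : ℂ) * (2 * (Real.pi : ℂ) * Complex.I) := by
    linear_combination (2 * (Real.pi : ℂ) * Complex.I / p) * hc + (k : ℂ) * hcp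
  have hk1 : Complex.exp ((k : ℂ) * (2 * (Real.pi : ℂ) * Complex.I)) = 1 := by
    have h := Complex.exp_int_mul_two_pi_mul_I (k : ℤ)
    push_cast at h
    exact h
  rw [key, Complex.exp_add, hk1, mul_one]

lemma zpow'_pow {p : ℕ} [NeZero p] (N : ℕ) (x : ZMod p) :
    zpow' p x ^ N = zpow' p ((N : ZMod p) * x) := by
  induction N with
  | zero => simp [zpow'_zero]
  | succ n ih =>
      rw [pow_succ, ih, ← zpow'_add]
      congr 1
      push_cast
      ring

lemma zpow'_sum {p : ℕ} [NeZero p] {α : Type*} (e : Finset α) (g : α → ZMod p) :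
    ∏ i ∈ e, zpow' p (g i) = zpow' p (∑ i ∈ e, g i) := by
  induction e using Finset.cons_induction with
  | empty => simp [zpow'_zero]
  | cons a e ha ih => rw [Finset.prod_cons, Finset.sum_cons, zpow'_add, ih]

lemma zpow'_one_ne_one {p : ℕ} (hp2 : 2 ≤ p) : zpow' p 1 ≠ 1 := by
  haveI : NeZero p := ⟨by omega⟩
  haveI : Fact (1 < p) := ⟨by omega⟩
  intro h
  rw [zpow', ZMod.val_one] at h
  obtain ⟨n, hn⟩ := Complex.exp_eq_one_iff.mp h
  have hπ : (2 * (Real.pi : ℂ) * Complex.I) ≠ 0 := by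
    simp [Real.pi_ne_zero, Complex.I_ne_zero]
  have hp : (p : ℂ) ≠ 0 := Nat.cast_ne_zero.2 (NeZero.ne p)
  push_cast at hn
  have h1 : (1 : ℂ) / p = (n : ℂ) :=
    mul_left_cancel₀ hπ (by linear_combination hn)
  have h2 : ((1 : ℤ) : ℂ) = (((p : ℤ) * n : ℤ) : ℂ) := by
    push_cast
    field_simp at h1
    linear_combination h1
  have h3 : (1 : ℤ) = (p : ℤ) * n := by exact_mod_cast h2
  have h4 : (p : ℤ) ∣ 1 := ⟨n, h3⟩
  have h5 := Int.le_of_dvd one_pos h4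
  omega

variable {p : ℕ} {s : ℕ}

/-- index type -/
abbrev GIdx (p s : ℕ) := (Fin (s + 1) → ZMod p) × (Fin (s + 1) → ZMod p)

/-- the symplectic form -/
def sg (s : ℕ) (a b : GIdx p s) : ZMod p := ∑ ℓ, (a.2 ℓ * b.1 ℓ - b.2 ℓ * a.1 ℓ)

lemma sg_self (a : GIdx p s) : sg s a a = 0 := by simp [sg]

lemma sg_zero_right (a : GIdx p s) : sg s a 0 = 0 := by simp [sg]

lemma sg_zero_left (a : GIdx p s) : sg s 0 a = 0 := by simp [sg]

lemma sg_antisymm (a b : GIdx p s) : sg s a b = -sg s b a := by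
  rw [sg, sg, ← Finset.sum_neg_distrib]
  exact Finset.sum_congr rfl fun ℓ _ => by ring

lemma sg_add_right (a b c : GIdx p s) : sg s a (b + c) = sg s a b + sg s a c := by
  rw [sg, sg, sg, ← Finset.sum_add_distrib]
  exact Finset.sum_congr rfl fun ℓ _ => by
    simp only [Prod.fst_add, Prod.snd_add, Pi.add_apply]; ring

lemma sg_sub_left (a b c : GIdx p s) : sg s (a - c) b = sg s a b - sg s c b := by
  rw [sg, sg, sg, ← Finset.sum_sub_distrib]
  exact Finset.sum_congr rfl fun ℓ _ => by
    simp only [Prod.fst_sub, Prod.snd_sub, Pi.sub_apply]; ring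

lemma sg_cocycle (a b c : GIdx p s) : sg s a b + sg s b c = sg s (a - c) b := by
  rw [sg_sub_left, sg_antisymm c b]
  ring

lemma sum_char (hp : p.Prime) [NeZero p] (t : ZMod p) (ht : t ≠ 0)
    (d : GIdx p s) (hd : d ≠ 0) :
    ∑ b : GIdx p s, zpow' p (t * sg s d b) = 0 := by
  haveI := Fact.mk hp
  -- find b₀ with t * sg s d b₀ = 1
  obtain ⟨b₀, hb₀⟩ : ∃ b₀ : GIdx p s, t * sg s d b₀ = 1 := by
    by_cases h2 : d.2 = 0
    · have h1 : d.1 ≠ 0 := by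
        intro h1; exact hd (Prod.ext h1 h2)
      obtain ⟨j, hj⟩ := Function.ne_iff.mp h1
      refine ⟨(0, Pi.single j (-(t * d.1 j)⁻¹)), ?_⟩
      have htd : t * d.1 j ≠ 0 := mul_ne_zero ht hj
      rw [sg]
      rw [Finset.sum_eq_single j]
      · simp only [Pi.single_eq_same]
        field_simp
        simp [div_self (show d.1 j ≠ 0 from hj)]
      · intro ℓ _ hℓ
        simp [Pi.single_eq_of_ne hℓ]
      · intro h; exact absurd (Finset.mem_univ j) h
    · obtain ⟨j, hj⟩ := Function.ne_iff.mp h2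
      refine ⟨(Pi.single j ((t * d.2 j)⁻¹), 0), ?_⟩
      have htd : t * d.2 j ≠ 0 := mul_ne_zero ht hj
      rw [sg]
      rw [Finset.sum_eq_single j]
      · simp only [Pi.single_eq_same]
        field_simp
        simp [div_self (show d.2 j ≠ 0 from hj)]
      · intro ℓ _ hℓ
        simp [Pi.single_eq_of_ne hℓ]
      · intro h; exact absurd (Finset.mem_univ j) h
  set S := ∑ b : GIdx p s, zpow' p (t * sg s d b) with hS
  have hshift : S = zpow' p 1 * S := by
    have h1 : S = ∑ b : GIdx p s, zpow' p (t * sg s d (b + b₀)) := by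
      rw [hS]
      exact (Fintype.sum_equiv (Equiv.addRight b₀)
        (fun b => zpow' p (t * sg s d (b + b₀)))
        (fun b => zpow' p (t * sg s d b)) (fun b => rfl)).symm
    conv_lhs => rw [h1]
    rw [Finset.mul_sum]
    refine Finset.sum_congr rfl fun b _ => ?_
    rw [sg_add_right, mul_add, hb₀, zpow'_add]
    ring
  have hne : zpow' p 1 - 1 ≠ 0 := sub_ne_zero.mpr (zpow'_one_ne_one hp.two_le)
  have : (zpow' p 1 - 1) * S = 0 := by ring_nf; linear_combination -hshift
  rcases mul_eq_zero.mp this with h | h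
  · exact absurd h hne
  · exact h

lemma sum_char_or (hp : p.Prime) [NeZero p] (t : ZMod p)
    (d : GIdx p s) (hd : d ≠ 0) :
    ∑ b : GIdx p s, zpow' p (t * sg s d b)
      = if t = 0 then (Fintype.card (GIdx p s) : ℂ) else 0 := by
  by_cases ht : t = 0
  · simp [ht, zpow'_zero, Finset.card_univ]
  · rw [if_neg ht]; exact sum_char hp t ht d hd

lemma sum_shift {ι : Type*} [Fintype ι] [DecidableEq ι] (F G : ι → ℂ)
    (e : Finset ι) (h : ∀ b ∉ e, F b = G b) :
    ∑ b, F b = ∑ b, G b + ∑ b ∈ e, (F b - G b) := by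
  have h1 : ∑ b ∈ e, (F b - G b) = ∑ b, (F b - G b) :=
    Finset.sum_subset (Finset.subset_univ e) (fun b _ hb => by rw [h b hb]; ring)
  rw [h1, Finset.sum_sub_distrib]
  ring

/-- Spectrum of a matrix satisfying a quadratic equation with distinct roots. -/
lemma spectrum_pair {ι : Type*} [Fintype ι] [DecidableEq ι]
    (M : Matrix ι ι ℂ) (μ ν : ℂ) (hμν : μ ≠ ν)
    (hM2 : M * M = (μ + ν) • M - (μ * ν) • (1 : Matrix ι ι ℂ))
    (h1 : M ≠ μ • 1) (h2 : M ≠ ν • 1) :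
    spectrum ℂ M = {μ, ν} := by
  have hfac : (μ • 1 - M) * (M - ν • 1) = 0 := by
    simp only [sub_mul, mul_sub, smul_mul_assoc, one_mul, mul_smul_comm, mul_one,
      smul_smul, hM2]
    module
  have hfac' : (ν • 1 - M) * (M - μ • 1) = 0 := by
    simp only [sub_mul, mul_sub, smul_mul_assoc, one_mul, mul_smul_comm, mul_one,
      smul_smul, hM2]
    module
  ext lam
  simp only [Set.mem_insert_iff, Set.mem_singleton_iff]
  constructor
  · intro hlam
    by_contra hcon
    push_neg at hcon
    obtain ⟨hlμ, hlν⟩ := hcon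
    rw [spectrum.mem_iff] at hlam
    apply hlam
    have hresolvent : (lam • (1 : Matrix ι ι ℂ) - M)
        * (((lam - μ) * (lam - ν))⁻¹ • (M + (lam - μ - ν) • 1)) = 1 := by
      rw [mul_smul_comm]
      have hexp : (lam • (1 : Matrix ι ι ℂ) - M) * (M + (lam - μ - ν) • 1)
          = ((lam - μ) * (lam - ν)) • (1 : Matrix ι ι ℂ) := by
        simp only [sub_mul, mul_add, add_mul, smul_mul_assoc, one_mul,
          mul_smul_comm, mul_one, smul_smul, hM2]
        module
      rw [hexp, smul_smul, inv_mul_cancel₀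
        (mul_ne_zero (sub_ne_zero.mpr hlμ) (sub_ne_zero.mpr hlν)), one_smul]
    have hdet : IsUnit (lam • (1 : Matrix ι ι ℂ) - M) := by
      apply (Matrix.isUnit_iff_isUnit_det _).mpr
      have := congrArg Matrix.det hresolvent
      rw [Matrix.det_mul, Matrix.det_one] at this
      exact IsUnit.of_mul_eq_one _ this
    rwa [Algebra.algebraMap_eq_smul_one]
  · intro hlam
    rcases hlam with h | h
    · subst h
      rw [spectrum.mem_iff, Algebra.algebraMap_eq_smul_one]
      intro hu
      have := hu.mul_left_cancel (a := lam • (1 : Matrix ι ι ℂ) - M)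
        (b := M - ν • 1) (c := 0) (by rw [hfac, mul_zero])
      exact h2 (by rw [sub_eq_zero] at this; exact this)
    · subst h
      rw [spectrum.mem_iff, Algebra.algebraMap_eq_smul_one]
      intro hu
      have := hu.mul_left_cancel (a := lam • (1 : Matrix ι ι ℂ) - M)
        (b := M - μ • 1) (c := 0) (by rw [hfac', mul_zero])
      exact h1 (by rw [sub_eq_zero] at this; exact this)

end GSaux

open GSaux in
/-- For `p ≥ 3` prime and `m = (p,…,p)`, every off-diagonal entry of the normalized
signature matrix `S̄` of `G(m)` is a `2p`-th root of unity, and every Hadamard power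
`S̄^{∘N}` (`N ≥ 1`) has exactly two distinct eigenvalues.  Consequently, by the roux
lines detector of Iverson–Mixon, the Gabor–Steiner ETF `G(p,…,p)` spans a set of roux
lines. -/
theorem gabor_steiner_roux {p : ℕ} (hp : p.Prime) (hp3 : 3 ≤ p) [NeZero p] (s : ℕ) :
    (∀ a b : (Fin (s + 1) → ZMod p) × (Fin (s + 1) → ZMod p),
      a ≠ b → (gsSbarP p s a b) ^ (2 * p) = 1) ∧
    (∀ N : ℕ, 0 < N →
      ∃ μ ν : ℂ, μ ≠ ν ∧
        spectrum ℂ (Matrix.of fun a b => (gsSbarP p s a b) ^ N) = {μ, ν}) := by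
  haveI := Fact.mk hp
  constructor
  · intro a b hab
    rw [gsSbarP]
    by_cases h : a ≠ b ∧ a ≠ 0 ∧ b ≠ 0
    · rw [if_pos h, neg_pow]
      have h1 : (-1 : ℂ) ^ (2 * p) = 1 := by
        rw [pow_mul]; norm_num
      rw [h1, one_mul, ← Finset.prod_pow]
      have h2 : ∀ ℓ : Fin (s + 1),
          zpow' p ((a.2 ℓ * b.1 ℓ - b.2 ℓ * a.1 ℓ) * (2 : ZMod p)⁻¹) ^ (2 * p) = 1 := by
        intro ℓ
        rw [zpow'_pow]
        have : ((2 * p : ℕ) : ZMod p) = 0 := by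
          rw [ZMod.natCast_eq_zero_iff]
          exact ⟨2, Nat.mul_comm 2 p⟩
        rw [this, zero_mul, zpow'_zero]
      rw [Finset.prod_congr rfl fun ℓ _ => h2 ℓ, Finset.prod_const_one]
    · rw [if_neg h, if_neg hab, one_pow]
  · intro N hN
    classical
    -- basic facts
    have h2ne : (2 : ZMod p) ≠ 0 := by
      intro h
      have h' : ((2 : ℕ) : ZMod p) = 0 := by exact_mod_cast h
      rw [ZMod.natCast_eq_zero_iff] at h'
      have := Nat.le_of_dvd two_pos h'
      omega
    set t : ZMod p := (N : ZMod p) * (2 : ZMod p)⁻¹ with htdef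
    set ε : ℂ := (-1 : ℂ) ^ N with hε
    have hε2 : ε * ε = 1 := by
      rw [hε, ← pow_add, ← two_mul, pow_mul]
      norm_num
    have hεne : ε ≠ 0 := by
      rw [hε]; exact pow_ne_zero _ (by norm_num)
    set n : ℕ := Fintype.card (GIdx p s) with hn
    have hn_pos : 0 < n := by rw [hn]; exact Fintype.card_pos
    have hnC : ((n : ℂ)) ≠ 0 := Nat.cast_ne_zero.mpr hn_pos.ne'
    set M : Matrix (GIdx p s) (GIdx p s) ℂ :=
      Matrix.of (fun a b => (gsSbarP p s a b) ^ N) with hM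
    have hMe : ∀ a b : GIdx p s, M a b = (gsSbarP p s a b) ^ N := fun _ _ => rfl
    -- entry lemmas
    have hMdiag : ∀ a : GIdx p s, (gsSbarP p s a a) ^ N = 0 := by
      intro a
      have h0 : gsSbarP p s a a = 0 := by
        rw [gsSbarP, if_neg (by simp), if_pos rfl]
      rw [h0, zero_pow hN.ne']
    have hMone : ∀ a b : GIdx p s, a ≠ b → (a = 0 ∨ b = 0) →
        (gsSbarP p s a b) ^ N = 1 := by
      intro a b hab h0
      have h1 : gsSbarP p s a b = 1 := by
        rw [gsSbarP, if_neg, if_neg hab]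
        rintro ⟨h1, h2, h3⟩
        rcases h0 with h | h
        · exact h2 h
        · exact h3 h
      rw [h1, one_pow]
    have hMgen : ∀ a b : GIdx p s, a ≠ b → a ≠ 0 → b ≠ 0 →
        (gsSbarP p s a b) ^ N = ε * zpow' p (t * sg s a b) := by
      intro a b hab ha hb
      rw [gsSbarP, if_pos ⟨hab, ha, hb⟩, neg_pow, ← hε]
      congr 1
      rw [← Finset.prod_pow]
      have hterm : ∀ ℓ : Fin (s + 1),
          zpow' p ((a.2 ℓ * b.1 ℓ - b.2 ℓ * a.1 ℓ) * (2 : ZMod p)⁻¹) ^ N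
          = zpow' p ((N : ZMod p) * ((a.2 ℓ * b.1 ℓ - b.2 ℓ * a.1 ℓ) * (2 : ZMod p)⁻¹)) :=
        fun ℓ => zpow'_pow N _
      rw [Finset.prod_congr rfl fun ℓ _ => hterm ℓ, zpow'_sum]
      congr 1
      rw [sg, Finset.mul_sum, htdef]
      exact Finset.sum_congr rfl fun ℓ _ => by ring
    set c₀ : ℂ := if t = 0 then ε * ((n : ℂ) - 2) else -2 * ε with hc₀
    -- the quadratic relation
    have hM2 : M * M = c₀ • M + ((n : ℂ) - 1) • (1 : Matrix (GIdx p s) (GIdx p s) ℂ) := by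
      ext a c
      rw [Matrix.mul_apply]
      simp only [Matrix.add_apply, Matrix.smul_apply, Matrix.one_apply, smul_eq_mul, hMe]
      by_cases hac : a = c
      · subst hac
        rw [if_pos rfl, hMdiag a, mul_zero, zero_add]
        by_cases ha0 : a = 0
        · subst ha0
          rw [sum_shift (fun b => (gsSbarP p s 0 b) ^ N * (gsSbarP p s b 0) ^ N)
            (fun _ => 1) {0}
            (by intro b hb
                rw [Finset.mem_singleton] at hb
                beta_reduce
                rw [hMone 0 b (Ne.symm hb) (Or.inl rfl), hMone b 0 hb (Or.inr rfl), one_mul])]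
          rw [Finset.sum_const, Finset.card_univ, Finset.sum_singleton, hMdiag 0, ← hn,
            nsmul_eq_mul, mul_one]
          ring
        · rw [sum_shift (fun b => (gsSbarP p s a b) ^ N * (gsSbarP p s b a) ^ N)
            (fun _ => 1) {0, a}
            (by intro b hb
                rw [Finset.mem_insert, Finset.mem_singleton] at hb
                push_neg at hb
                beta_reduce
                rw [hMgen a b (fun h => hb.2 h.symm) ha0 hb.1,
                  hMgen b a hb.2 hb.1 ha0, sg_antisymm b a]
                have harg : t * sg s a b + t * -sg s a b = 0 := by ring
                calc ε * zpow' p (t * sg s a b) * (ε * zpow' p (t * -sg s a b))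
                    = (ε * ε) * (zpow' p (t * sg s a b) * zpow' p (t * -sg s a b)) := by ring
                  _ = 1 := by rw [hε2, one_mul, ← zpow'_add, harg, zpow'_zero])]
          rw [Finset.sum_const, Finset.card_univ,
            Finset.sum_pair (Ne.symm ha0), ← hn, nsmul_eq_mul, mul_one]
          beta_reduce
          rw [hMdiag a, hMone a 0 ha0 (Or.inr rfl), hMone 0 a (Ne.symm ha0) (Or.inl rfl)]
          ring
      · rw [if_neg hac, mul_zero, add_zero]
        by_cases ha0 : a = 0
        · have hc0 : c ≠ 0 := fun h => hac (by rw [ha0, h])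
          subst ha0
          rw [sum_shift (fun b => (gsSbarP p s 0 b) ^ N * (gsSbarP p s b c) ^ N)
            (fun b => ε * zpow' p ((-t) * sg s c b)) {0, c}
            (by intro b hb
                rw [Finset.mem_insert, Finset.mem_singleton] at hb
                push_neg at hb
                beta_reduce
                rw [hMone 0 b (Ne.symm hb.1) (Or.inl rfl), one_mul,
                  hMgen b c hb.2 hb.1 hc0, sg_antisymm b c]
                have harg : t * -sg s c b = (-t) * sg s c b := by ring
                rw [harg])]
          rw [← Finset.mul_sum, sum_char_or hp (-t) c hc0,
            Finset.sum_pair (Ne.symm hc0)]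
          beta_reduce
          rw [hMdiag 0, hMdiag c, zero_mul, mul_zero,
            hMone 0 c (Ne.symm hc0) (Or.inl rfl)]
          rw [sg_zero_right, sg_self, mul_zero, zpow'_zero, mul_one]
          simp only [neg_eq_zero, ← hn]
          by_cases ht0 : t = 0
          · rw [if_pos ht0, hc₀, if_pos ht0]; ring
          · rw [if_neg ht0, hc₀, if_neg ht0]; ring
        · by_cases hc0 : c = 0
          · subst hc0
            rw [sum_shift (fun b => (gsSbarP p s a b) ^ N * (gsSbarP p s b 0) ^ N)
              (fun b => ε * zpow' p (t * sg s a b)) {0, a}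
              (by intro b hb
                  rw [Finset.mem_insert, Finset.mem_singleton] at hb
                  push_neg at hb
                  beta_reduce
                  rw [hMone b 0 hb.1 (Or.inr rfl), mul_one,
                    hMgen a b (fun h => hb.2 h.symm) ha0 hb.1])]
            rw [← Finset.mul_sum, sum_char_or hp t a ha0,
              Finset.sum_pair (Ne.symm ha0)]
            beta_reduce
            rw [hMdiag 0, hMdiag a, mul_zero, zero_mul,
              hMone a 0 ha0 (Or.inr rfl)]
            rw [sg_zero_right, sg_self, mul_zero, zpow'_zero, mul_one]
            simp only [← hn]
            by_cases ht0 : t = 0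
            · rw [if_pos ht0, hc₀, if_pos ht0]; ring
            · rw [if_neg ht0, hc₀, if_neg ht0]; ring
          · -- generic case
            have hsub : a - c ≠ 0 := sub_ne_zero.mpr hac
            have hgac : sg s (a - c) a = sg s a c := by
              rw [sg_sub_left, sg_self, sg_antisymm c a]
              ring
            have hgcc : sg s (a - c) c = sg s a c := by
              rw [sg_sub_left, sg_self]
              ring
            rw [sum_shift (fun b => (gsSbarP p s a b) ^ N * (gsSbarP p s b c) ^ N)
              (fun b => zpow' p (t * sg s (a - c) b)) {0, a, c}
              (by intro b hb
                  rw [Finset.mem_insert, Finset.mem_insert, Finset.mem_singleton] at hb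
                  push_neg at hb
                  beta_reduce
                  rw [hMgen a b (fun h => hb.2.1 h.symm) ha0 hb.1,
                    hMgen b c hb.2.2 hb.1 hc0]
                  calc ε * zpow' p (t * sg s a b) * (ε * zpow' p (t * sg s b c))
                      = (ε * ε) * (zpow' p (t * sg s a b) * zpow' p (t * sg s b c)) := by
                        ring
                    _ = zpow' p (t * sg s a b + t * sg s b c) := by
                        rw [hε2, one_mul, zpow'_add]
                    _ = zpow' p (t * sg s (a - c) b) := by
                        rw [← sg_cocycle]; ring_nf)]
            have h0m : (0 : GIdx p s) ∉ ({a, c} : Finset (GIdx p s)) := by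
              rw [Finset.mem_insert, Finset.mem_singleton]
              push_neg
              exact ⟨Ne.symm ha0, Ne.symm hc0⟩
            rw [sum_char_or hp t (a - c) hsub, Finset.sum_insert h0m,
              Finset.sum_pair hac]
            beta_reduce
            rw [hMdiag a, hMdiag c, zero_mul, mul_zero,
              hMone a 0 ha0 (Or.inr rfl), hMone 0 c (Ne.symm hc0) (Or.inl rfl),
              hgac, hgcc, sg_zero_right, mul_zero, zpow'_zero,
              hMgen a c hac ha0 hc0]
            simp only [← hn]
            by_cases ht0 : t = 0
            · rw [if_pos ht0, hc₀, if_pos ht0, ht0]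
              simp only [zero_mul, zpow'_zero]
              linear_combination (2 - (n : ℂ)) * hε2
            · rw [if_neg ht0, hc₀, if_neg ht0]
              linear_combination (2 * zpow' p (t * sg s a c)) * hε2
    -- M is not scalar
    have hMns : ∀ x : ℂ, M ≠ x • (1 : Matrix (GIdx p s) (GIdx p s) ℂ) := by
      intro x h
      have hb₁ : ((fun _ => (1 : ZMod p)), (0 : Fin (s + 1) → ZMod p)) ≠ (0 : GIdx p s) := by
        intro hh
        have h1 := congrFun (congrArg Prod.fst hh) 0
        simp only [Prod.fst_zero, Pi.zero_apply] at h1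
        exact one_ne_zero h1
      set b₁ : GIdx p s := ((fun _ => (1 : ZMod p)), (0 : Fin (s + 1) → ZMod p)) with hb₁def
      have h1 : M 0 b₁ = 1 := hMone 0 b₁ (Ne.symm hb₁) (Or.inl rfl)
      have h2 : (x • (1 : Matrix (GIdx p s) (GIdx p s) ℂ)) 0 b₁ = 0 := by
        rw [Matrix.smul_apply, Matrix.one_apply, if_neg (Ne.symm hb₁)]
        simp
      apply one_ne_zero (α := ℂ)
      rw [← h1, h, h2]
    by_cases ht0 : t = 0
    · -- two eigenvalues ε(n-1), -ε
      refine ⟨ε * ((n : ℂ) - 1), -ε, ?_, ?_⟩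
      · intro h
        have h1 : ε * (n : ℂ) = 0 := by linear_combination h
        rcases mul_eq_zero.mp h1 with h | h
        · exact hεne h
        · exact hnC h
      · have e1 : ε * ((n : ℂ) - 1) + (-ε) = c₀ := by
          rw [hc₀, if_pos ht0]; ring
        have e2 : -((ε * ((n : ℂ) - 1)) * (-ε)) = (n : ℂ) - 1 := by
          linear_combination ((n : ℂ) - 1) * hε2
        have hM2' : M * M = (ε * ((n : ℂ) - 1) + (-ε)) • M
            - ((ε * ((n : ℂ) - 1)) * (-ε)) • (1 : Matrix (GIdx p s) (GIdx p s) ℂ) := by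
          rw [hM2]
          match_scalars
          · linear_combination -e1
          · linear_combination -e2
        exact spectrum_pair M _ _ (by
            intro h
            have h1 : ε * (n : ℂ) = 0 := by linear_combination h
            rcases mul_eq_zero.mp h1 with h | h
            · exact hεne h
            · exact hnC h) hM2' (hMns _) (hMns _)
    · -- two eigenvalues -ε ± √n
      set r : ℂ := ((Real.sqrt n : ℝ) : ℂ) with hr
      have hr2 : r * r = (n : ℂ) := by
        rw [hr, ← Complex.ofReal_mul, Real.mul_self_sqrt (Nat.cast_nonneg n)]
        push_cast
        rfl
      have hrne : r ≠ 0 := by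
        rw [hr, Complex.ofReal_ne_zero]
        exact (Real.sqrt_ne_zero' ).mpr (by exact_mod_cast hn_pos)
      have hμν : -ε + r ≠ -ε - r := by
        intro h
        have h1 : r = -r := by linear_combination h
        exact hrne (by linear_combination h1 / 2)
      refine ⟨-ε + r, -ε - r, hμν, ?_⟩
      have e1 : (-ε + r) + (-ε - r) = c₀ := by
        rw [hc₀, if_neg ht0]; ring
      have e2 : -((-ε + r) * (-ε - r)) = (n : ℂ) - 1 := by
        linear_combination hr2 - hε2
      have hM2' : M * M = ((-ε + r) + (-ε - r)) • M
          - ((-ε + r) * (-ε - r)) • (1 : Matrix (GIdx p s) (GIdx p s) ℂ) := by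
        rw [hM2]
        match_scalars
        · linear_combination -e1
        · linear_combination -e2
      exact spectrum_pair M _ _ hμν hM2' (hMns _) (hMns _)
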